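/- arXiv:1906.07949 — 2 statements merged into one kernel-verified Lean document; each statement's English description precedes it below -/
import Mathlib

section
/- Let R, S ∈ M_N(ℂ) be self-adjoint symmetries (R* = R, R² = I, S* = S, S² = I) and U ∈ U(N) a unitary matrix, and set A = R U S U*. Then for every n ≥ 1, tr(A^{n-1} R) = tr(R) if n is odd and tr(A^{n-1} R) = tr(S) if n is even, where tr = (1/N)Tr is the normalized trace. -/
open Matrix

/-- The normalized trace `(1/N) Tr` on `M_N(ℂ)`. -/
noncomputable def ntr (N : ℕ) (M : Matrix (Fin N) (Fin N) ℂ) : ℂ :=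
  M.trace / N

/-- Let `R, S` be self-adjoint symmetries, `U` unitary, and `A = R U S U*`.
Then `tr(A^{n-1} R) = tr R` for odd `n` and `tr(A^{n-1} R) = tr S` for even `n`. -/
theorem ntr_pow_mul_symmetry (N : ℕ) (R S U : Matrix (Fin N) (Fin N) ℂ)
    (hR : R.IsHermitian) (hR2 : R * R = 1)
    (hS : S.IsHermitian) (hS2 : S * S = 1)
    (hU : U * Uᴴ = 1) (hU' : Uᴴ * U = 1)
    (A : Matrix (Fin N) (Fin N) ℂ) (hA : A = R * U * S * Uᴴ) :
    ∀ n : ℕ, 1 ≤ n →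
      (Odd n → ntr N (A ^ (n - 1) * R) = ntr N R) ∧
      (Even n → ntr N (A ^ (n - 1) * R) = ntr N S) := by
  set T : Matrix (Fin N) (Fin N) ℂ := U * S * Uᴴ with hTdef
  have hAT : A = R * T := by rw [hA, hTdef]; noncomm_ring
  have hT2 : T * T = 1 := by
    have : T * T = U * S * (Uᴴ * U) * S * Uᴴ := by rw [hTdef]; noncomm_ring
    rw [this, hU', mul_one]
    have : U * S * S * Uᴴ = U * (S * S) * Uᴴ := by noncomm_ring
    rw [this, hS2, mul_one, hU]
  have hARA : A * R * A = R := by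
    have : A * R * A = R * T * (R * R) * T := by rw [hAT]; noncomm_ring
    rw [this, hR2, mul_one, mul_assoc, hT2, mul_one]
  have step : ∀ m : ℕ, (A ^ (m + 2) * R).trace = (A ^ m * R).trace := by
    intro m
    have h1 : A ^ (m + 2) * R = A * (A ^ (m + 1) * R) := by
      rw [pow_succ' A (m + 1), mul_assoc]
    rw [h1, Matrix.trace_mul_comm]
    have h2 : A ^ (m + 1) * R * A = A ^ m * R := by
      rw [pow_succ]
      calc A ^ m * A * R * A = A ^ m * (A * R * A) := by noncomm_ring
        _ = A ^ m * R := by rw [hARA]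
    rw [h2]
  have base1 : (A ^ 1 * R).trace = S.trace := by
    have h1 : A ^ 1 * R = R * T * R := by rw [pow_one, hAT]
    have h2 : (R * T * R).trace = (R * R * T).trace := by
      rw [Matrix.trace_mul_comm (R * T) R, ← mul_assoc]
    rw [h1, h2, hR2, one_mul, hTdef, Matrix.trace_mul_comm, ← mul_assoc,
      ← Matrix.trace_mul_comm, hU', mul_one]
  have key : ∀ m : ℕ, (A ^ m * R).trace = if Even m then R.trace else S.trace := by
    intro m
    induction m using Nat.strong_induction_on with
    | _ m ih =>
      match m with
      | 0 => simp
      | 1 => simpa using base1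
      | (k + 2) =>
        rw [step k, ih k (by omega)]
        simp [Nat.even_add_one, Nat.even_add]
  intro n hn
  constructor
  · intro hodd
    have : Even (n - 1) := by
      rcases hodd with ⟨k, hk⟩; exact ⟨k, by omega⟩
    unfold ntr; rw [key, if_pos this]
  · intro heven
    have : ¬ Even (n - 1) := by
      rcases heven with ⟨k, hk⟩
      rintro ⟨j, hj⟩; omega
    unfold ntr; rw [key, if_neg this]
end

section
/- Let R, S ∈ M_N(ℂ) be self-adjoint symmetries, U ∈ U(N) unitary, A = RUSU*, α = tr(R), β = tr(S). Then for every n ≥ 2 and every 1 ≤ p ≤ n−1, the product tr(A^{n-p-1}R)·tr(A^{p-1}R) equals α² if n is even and p is odd, β² if n and p are both even, and αβ if n is odd. -/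
open Matrix

/-- Let `R, S` be self-adjoint symmetries, `U` unitary, `A = RUSU*`, `α = tr R`,
`β = tr S`. For `n ≥ 2` and `1 ≤ p ≤ n−1`, the product `tr(A^{n-p-1}R)·tr(A^{p-1}R)`
equals `α²` if `n` is even and `p` odd, `β²` if `n` and `p` are both even,
and `αβ` if `n` is odd. -/
theorem ntr_prod_cases (N : ℕ) (R S U : Matrix (Fin N) (Fin N) ℂ)
    (hR : R.IsHermitian) (hR2 : R * R = 1)
    (hS : S.IsHermitian) (hS2 : S * S = 1)
    (hU : U * Uᴴ = 1) (hU' : Uᴴ * U = 1)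
    (A : Matrix (Fin N) (Fin N) ℂ) (hA : A = R * U * S * Uᴴ)
    (α β : ℂ) (hα : α = ntr N R) (hβ : β = ntr N S) :
    ∀ n : ℕ, 2 ≤ n → ∀ p : ℕ, 1 ≤ p → p ≤ n - 1 →
      (Even n → Odd p → ntr N (A ^ (n - p - 1) * R) * ntr N (A ^ (p - 1) * R) = α ^ 2) ∧
      (Even n → Even p → ntr N (A ^ (n - p - 1) * R) * ntr N (A ^ (p - 1) * R) = β ^ 2) ∧
      (Odd n → ntr N (A ^ (n - p - 1) * R) * ntr N (A ^ (p - 1) * R) = α * β) := by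
  set B : Matrix (Fin N) (Fin N) ℂ := U * S * Uᴴ with hB
  have hAB' : A = R * B := by rw [hA, hB]; noncomm_ring
  have hRA : R * A = B := by
    rw [hAB', ← mul_assoc, hR2, one_mul]
  have hABR : A * B = R := by
    rw [hAB', hB]
    calc R * (U * S * Uᴴ) * (U * S * Uᴴ)
        = R * (U * (S * ((Uᴴ * U) * (S * Uᴴ)))) := by noncomm_ring
      _ = R := by rw [hU', one_mul, ← mul_assoc S S Uᴴ, hS2, one_mul, hU, mul_one]
  have htrB : B.trace = S.trace := by
    rw [hB, trace_mul_comm, ← mul_assoc, hU', one_mul]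
  have key : ∀ k : ℕ, (A ^ k * R).trace = if Even k then R.trace else S.trace := by
    intro k
    induction k using Nat.twoStepInduction with
    | zero => simp
    | one =>
      have h1 : ¬ Even 1 := by decide
      rw [pow_one, trace_mul_comm, hRA, htrB, if_neg h1]
    | more k ih _ =>
      have step : (A ^ (k + 2) * R).trace = (A ^ k * R).trace := by
        calc (A ^ (k + 2) * R).trace
            = (A * (A ^ (k + 1) * R)).trace := by rw [pow_succ', mul_assoc]
          _ = ((A ^ (k + 1) * R) * A).trace := trace_mul_comm _ _
          _ = (A ^ (k + 1) * (R * A)).trace := by rw [mul_assoc]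
          _ = (A ^ k * (A * B)).trace := by rw [hRA, pow_succ, mul_assoc]
          _ = (A ^ k * R).trace := by rw [hABR]
      rw [step, ih]
      have : Even (k + 2) ↔ Even k := by
        rw [Nat.even_iff, Nat.even_iff]; omega
      by_cases h : Even k
      · rw [if_pos h, if_pos (this.mpr h)]
      · rw [if_neg h, if_neg (fun hc => h (this.mp hc))]
  have keyn : ∀ k : ℕ, ntr N (A ^ k * R) = if Even k then α else β := by
    intro k
    unfold ntr
    rw [key k, hα, hβ]
    unfold ntr
    by_cases h : Even k <;> simp [h]
  intro n hn p hp1 hp2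
  refine ⟨?_, ?_, ?_⟩
  · intro hne hpo
    rw [Nat.even_iff] at hne
    rw [Nat.odd_iff] at hpo
    have h1 : Even (n - p - 1) := by rw [Nat.even_iff]; omega
    have h2 : Even (p - 1) := by rw [Nat.even_iff]; omega
    rw [keyn (n - p - 1), keyn (p - 1)]
    simp [h1, h2, sq]
  · intro hne hpe
    rw [Nat.even_iff] at hne hpe
    have h1 : ¬ Even (n - p - 1) := by rw [Nat.even_iff]; omega
    have h2 : ¬ Even (p - 1) := by rw [Nat.even_iff]; omega
    rw [keyn (n - p - 1), keyn (p - 1)]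
    simp [h1, h2, sq]
  · intro hno
    rw [Nat.odd_iff] at hno
    by_cases hpe : Even p
    · have hpe' := Nat.even_iff.mp hpe
      have h1 : Even (n - p - 1) := by rw [Nat.even_iff]; omega
      have h2 : ¬ Even (p - 1) := by rw [Nat.even_iff]; omega
      rw [keyn (n - p - 1), keyn (p - 1)]
      simp [h1, h2]
    · have hpe' := Nat.odd_iff.mp (Nat.not_even_iff_odd.mp hpe)
      have h1 : ¬ Even (n - p - 1) := by rw [Nat.even_iff]; omega
      have h2 : Even (p - 1) := by rw [Nat.even_iff]; omega
      rw [keyn (n - p - 1), keyn (p - 1)]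
      simp [h1, h2, mul_comm]
end
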